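/- Let R be a division ring and suppose elements a, b, c, d of R and monic polynomials q, r, s, u in R[t] satisfy u = (t−c)(t−a)q = (t−d)(t−b)q with a ≠ b. Then c = (a−b)b(a−b)^{-1} and d = (b−a)a(b−a)^{-1}. -/
import Mathlib


open Polynomial

/-- Over a division ring, if a polynomial factors both as `(t−c)(t−a)q` and
`(t−d)(t−b)q` with `q` monic and `a ≠ b`, then `c = (a−b)b(a−b)⁻¹` and
`d = (b−a)a(b−a)⁻¹`. -/
theorem pseudo_roots_conjugation {R : Type*} [DivisionRing R]
    (a b c d : R) (q u : R[X]) (hq : q.Monic)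
    (h1 : u = (X - C c) * (X - C a) * q)
    (h2 : u = (X - C d) * (X - C b) * q)
    (hab : a ≠ b) :
    c = (a - b) * b * (a - b)⁻¹ ∧ d = (b - a) * a * (b - a)⁻¹ := by
  have h : (X - C c) * (X - C a) = (X - C d) * (X - C b) :=
    mul_right_cancel₀ hq.ne_zero (h1 ▸ h2)
  have hexp : ∀ x y : R, (X - C x) * (X - C y) =
      X ^ 2 - (C x + C y) * X + C (x * y) := by
    intro x y
    rw [sub_mul, mul_sub, mul_sub, add_mul, ← C_mul, X_mul_C]
    noncomm_ring
  rw [hexp, hexp] at h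
  have e1 : c + a = d + b := by
    have h' : -a + -c = -b + -d := by
      have := congrArg (fun p => p.coeff 1) h
      simpa [coeff_sub, coeff_add, coeff_X_pow, coeff_C] using this
    rw [← neg_add, ← neg_add, neg_inj] at h'
    simpa [add_comm] using h'
  have e0 : c * a = d * b := by
    have := congrArg (fun p => p.coeff 0) h
    simpa [coeff_sub, coeff_add, coeff_X_pow, coeff_C] using this
  have hab' : a - b ≠ 0 := sub_ne_zero.mpr hab
  have hba' : b - a ≠ 0 := sub_ne_zero.mpr (Ne.symm hab)
  have hd : d = c + a - b := eq_sub_iff_add_eq.mpr e1.symm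
  have hcc : c = d + b - a := eq_sub_iff_add_eq.mpr e1
  have hc : c * (a - b) = (a - b) * b := by
    have e0' : c * a = (c + a - b) * b := by rw [e0, ← hd]
    rw [mul_sub, sub_mul, e0']
    noncomm_ring
  have hdd : d * (b - a) = (b - a) * a := by
    have e0' : (d + b - a) * a = d * b := by rw [← e0, ← hcc]
    rw [mul_sub, sub_mul, ← e0']
    noncomm_ring
  refine ⟨?_, ?_⟩
  · rw [eq_comm, mul_inv_eq_iff_eq_mul₀ hab']
    exact hc.symm
  · rw [eq_comm, mul_inv_eq_iff_eq_mul₀ hba']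
    exact hdd.symm
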